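/- Let U = (a_{ij})_{0≤i,j≤n+1} ∈ U(1,n+1) (i.e., U·diag(1,-1,…,-1)·conj(U)ᵀ = diag(1,-1,…,-1)). Suppose a_{j,n+1} = -a_{j0} for 1 ≤ j ≤ n. Then the n×n submatrix A = (a_{ij})_{1≤i,j≤n} is unitary. -/
import Mathlib

theorem stmt7 (n : ℕ) (U : Matrix (Fin (n + 2)) (Fin (n + 2)) ℂ)
    (J : Matrix (Fin (n + 2)) (Fin (n + 2)) ℂ)
    (hJ : J = Matrix.diagonal (fun i => if i = 0 then 1 else -1))
    (hU : U * J * U.conjTranspose = J)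
    (hlast : ∀ j : Fin n, U j.succ.castSucc (Fin.last (n + 1)) = -U j.succ.castSucc 0)
    (A : Matrix (Fin n) (Fin n) ℂ)
    (hA : A = Matrix.of fun i j : Fin n => U i.succ.castSucc j.succ.castSucc) :
    A * A.conjTranspose = 1 := by
  subst hJ hA
  have hsplit : ∀ f : Fin (n + 2) → ℂ,
      ∑ b, f b = f 0 + (∑ i : Fin n, f i.succ.castSucc) + f (Fin.last (n + 1)) := by
    intro f
    rw [Fin.sum_univ_castSucc, Fin.sum_univ_succ, Fin.castSucc_zero]
  ext j k
  have h := congrFun (congrFun hU j.succ.castSucc) k.succ.castSucc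
  rw [Matrix.mul_apply, hsplit] at h
  simp only [Matrix.mul_diagonal, Matrix.conjTranspose_apply, Matrix.diagonal_apply,
    hlast, Fin.ext_iff, Fin.val_zero, Fin.val_last, Fin.coe_castSucc, Fin.val_succ,
    Nat.succ_ne_zero, Nat.add_one_ne_zero, if_false, if_true, add_left_inj,
    if_pos rfl, star_neg, mul_neg, neg_mul, mul_one, neg_neg, Finset.sum_neg_distrib] at h
  simp only [Matrix.mul_apply, Matrix.conjTranspose_apply, Matrix.one_apply, Matrix.of_apply,
    Fin.ext_iff]
  by_cases hjk : (j : ℕ) = (k : ℕ)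
  · simp only [hjk, if_true, if_pos rfl] at h ⊢
    linear_combination -h
  · simp only [hjk, if_false, if_neg hjk] at h ⊢
    linear_combination -h
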